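/- For every fixed n ∈ ℕ with n ≥ 1, the ratio |A_{m,n,2}| / (n + 1)^m tends to 0 as the dimension m tends to infinity; i.e., the Euclidean-degree multi-index set occupies an asymptotically vanishing fraction of the maximum-degree multi-index set as m → ∞. -/
import Mathlib


open Filter

private lemma mcard_sum {ι β : Type*} (s : Finset ι) (f : ι → Multiset β) :
    Multiset.card (∑ i ∈ s, f i) = ∑ i ∈ s, Multiset.card (f i) := by
  classical
  induction s using Finset.cons_induction with
  | empty => simp
  | cons a s ha ih => simp [Finset.sum_cons, ih]

private lemma count_enc {m : ℕ} (N : ℕ) (α : Fin m → ℕ) (i : Fin m) :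
    Multiset.count (Fin.castSucc i)
      ((∑ j, (α j) • ({Fin.castSucc j} : Multiset (Fin (m + 1))))
        + (N - ∑ j, α j) • ({Fin.last m} : Multiset (Fin (m + 1)))) = α i := by
  rw [Multiset.count_add, Multiset.count_sum']
  simp [Multiset.count_nsmul, Multiset.count_singleton,
    (Fin.castSucc_lt_last i).ne, Fin.castSucc_inj]

private lemma card_bound (n m : ℕ) :
    Nat.card {α : Fin m → ℕ // ∑ i, (α i) ^ 2 ≤ n ^ 2} ≤ (m + n ^ 2) ^ (n ^ 2) := by
  set N := n ^ 2 with hN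
  have hsum : ∀ α : {α : Fin m → ℕ // ∑ i, (α i) ^ 2 ≤ N}, ∑ i, α.1 i ≤ N := fun α =>
    le_trans (Finset.sum_le_sum fun i _ => Nat.le_self_pow two_ne_zero _) α.2
  set f : {α : Fin m → ℕ // ∑ i, (α i) ^ 2 ≤ N} → Sym (Fin (m + 1)) N := fun α =>
    ⟨(∑ j, (α.1 j) • ({Fin.castSucc j} : Multiset (Fin (m + 1))))
        + (N - ∑ j, α.1 j) • ({Fin.last m} : Multiset (Fin (m + 1))), by
      simp only [Multiset.card_add, mcard_sum, Multiset.card_nsmul,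
        Multiset.card_singleton, mul_one]
      exact Nat.add_sub_cancel' (hsum α)⟩ with hf
  have hinj : Function.Injective f := by
    intro α β hab
    ext i
    have := congrArg (fun s : Sym (Fin (m + 1)) N => Multiset.count (Fin.castSucc i) s.1) hab
    simpa only [hf, count_enc] using this
  calc Nat.card {α : Fin m → ℕ // ∑ i, (α i) ^ 2 ≤ N}
      ≤ Nat.card (Sym (Fin (m + 1)) N) := Nat.card_le_card_of_injective f hinj
    _ = Nat.multichoose (m + 1) N := by
        rw [Nat.card_eq_fintype_card, Sym.card_sym_eq_multichoose, Fintype.card_fin]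
    _ = (m + N).choose N := by rw [Nat.multichoose_eq]; congr 1; omega
    _ ≤ (m + N) ^ N := Nat.choose_le_pow _ _

/-- For every fixed `n ≥ 1`, the fraction `|A_{m,n,2}| / (n + 1)^m` — the proportion of the
Euclidean-degree multi-index set inside the maximum-degree multi-index set (of cardinality
`(n+1)^m`) — tends to `0` as the dimension `m → ∞`. -/
theorem euclidean_degree_fraction_tendsto_zero (n : ℕ) (hn : 1 ≤ n) :
    Tendsto (fun m : ℕ =>
        (Nat.card {α : Fin m → ℕ // ∑ i, (α i) ^ 2 ≤ n ^ 2} : ℝ) / (n + 1) ^ m)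
      atTop (nhds 0) := by
  set N := n ^ 2 with hN
  set r : ℝ := (n : ℝ) + 1 with hr
  have hr1 : (1 : ℝ) < r := by
    have : (1 : ℝ) ≤ (n : ℝ) := by exact_mod_cast hn
    linarith
  have hr0 : r ≠ 0 := by linarith
  have h0 : Tendsto (fun m : ℕ => ((m : ℝ)) ^ N / r ^ m) atTop (nhds 0) :=
    tendsto_pow_const_div_const_pow_of_one_lt N hr1
  have h1 := (h0.comp (tendsto_add_atTop_nat N)).mul_const (r ^ N)
  rw [zero_mul] at h1
  have h2 : Tendsto (fun m : ℕ => (((m + N : ℕ)) : ℝ) ^ N / r ^ m) atTop (nhds 0) := by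
    refine h1.congr fun m => ?_
    simp only [Function.comp]
    rw [pow_add, ← div_div, div_mul_cancel₀]
    exact pow_ne_zero _ hr0
  refine squeeze_zero (fun m => by positivity) (fun m => ?_) h2
  have hb : (Nat.card {α : Fin m → ℕ // ∑ i, (α i) ^ 2 ≤ n ^ 2} : ℝ)
      ≤ (((m + N : ℕ)) : ℝ) ^ N := by
    calc (Nat.card {α : Fin m → ℕ // ∑ i, (α i) ^ 2 ≤ n ^ 2} : ℝ)
        ≤ (((m + N) ^ N : ℕ) : ℝ) := by exact_mod_cast card_bound n m
      _ = (((m + N : ℕ)) : ℝ) ^ N := by push_cast; ring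
  have hpos : (0 : ℝ) < r ^ m := by positivity
  exact div_le_div_of_nonneg_right hb hpos.le
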